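/- Let f ∈ C^k([0,1], ℂ) with f^{(j)}(0) = 0 for all 0 ≤ j ≤ k. Then |f(x)| ≤ (1/k!) x^k ‖f^{(k)}‖_∞ for all x ∈ [0,1]. Consequently, for any sequence x_n = 1/(n+1)² and k ≥ 1, the map f ↦ (f(x_n))_{n∈ℕ} is a continuous algebra homomorphism from the Banach algebra C₀^k([0,1], ℂ) (with the C^k-norm) into ℓ¹(ℕ, ℂ). -/

import Mathlib

/-- Let `f ∈ C^k([0,1], ℂ)` with `f^{(j)}(0) = 0` for `0 ≤ j ≤ k`. Then
`|f(x)| ≤ (1/k!) xᵏ ‖f^{(k)}‖_∞` on `[0,1]`. Consequently, for `k ≥ 1` and the sequence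
`x_n = 1/(n+1)²`, the evaluation map `f ↦ (f(x_n))_n` lands in `ℓ¹(ℕ, ℂ)` and is bounded
(its norm is controlled by `(1/k!) Σ_n (n+1)^{-2k}` times the `C^k`-norm); hence it is a
continuous algebra homomorphism `C₀^k([0,1], ℂ) → ℓ¹(ℕ, ℂ)` (multiplicativity of
pointwise evaluation being automatic). -/
theorem stmt19 (k : ℕ) (f : ℝ → ℂ)
    (hf : ContDiffOn ℝ k f (Set.Icc 0 1))
    (h0 : ∀ j ≤ k, iteratedDerivWithin j f (Set.Icc 0 1) 0 = 0)
    (M : ℝ)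
    (hM : ∀ x ∈ Set.Icc (0 : ℝ) 1, ‖iteratedDerivWithin k f (Set.Icc 0 1) x‖ ≤ M) :
    (∀ x ∈ Set.Icc (0 : ℝ) 1, ‖f x‖ ≤ (1 / (Nat.factorial k : ℝ)) * x ^ k * M) ∧
    (1 ≤ k →
      Summable (fun n : ℕ => ‖f (1 / ((n : ℝ) + 1) ^ 2)‖) ∧
      ∑' n : ℕ, ‖f (1 / ((n : ℝ) + 1) ^ 2)‖ ≤
        ((1 / (Nat.factorial k : ℝ)) * ∑' n : ℕ, 1 / ((n : ℝ) + 1) ^ (2 * k)) * M) := by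
  have hM0 : 0 ≤ M := le_trans (norm_nonneg _) (hM 0 (by constructor <;> norm_num))
  -- Main estimate by induction
  have key : ∀ j m : ℕ, m + j = k → ∀ x ∈ Set.Icc (0 : ℝ) 1,
      ‖iteratedDerivWithin m f (Set.Icc 0 1) x‖ ≤ M * x ^ j / (Nat.factorial j : ℝ) := by
    intro j
    induction j with
    | zero =>
      intro m hm x hx
      simp only [Nat.add_zero] at hm
      subst hm
      simpa using hM x hx
    | succ j ih =>
      intro m hm x hx
      have hm' : (m + 1) + j = k := by omega
      have hmk : m < k := by omega
      have hud : UniqueDiffOn ℝ (Set.Icc (0:ℝ) 1) := uniqueDiffOn_Icc (by norm_num)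
      have hcont : ContinuousOn (iteratedDerivWithin m f (Set.Icc 0 1)) (Set.Icc 0 1) :=
        hf.continuousOn_iteratedDerivWithin (by exact_mod_cast hmk.le) hud
      have hdiff : ∀ y ∈ Set.Ico (0:ℝ) 1,
          HasDerivWithinAt (iteratedDerivWithin m f (Set.Icc 0 1))
            (iteratedDerivWithin (m+1) f (Set.Icc 0 1) y) (Set.Ici y) y := by
        intro y hy
        have hy' : y ∈ Set.Icc (0:ℝ) 1 := Set.Ico_subset_Icc_self hy
        have hd : DifferentiableWithinAt ℝ (iteratedDerivWithin m f (Set.Icc 0 1))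
            (Set.Icc 0 1) y :=
          (hf.differentiableOn_iteratedDerivWithin (by exact_mod_cast hmk) hud) y hy'
        have h1 : HasDerivWithinAt (iteratedDerivWithin m f (Set.Icc 0 1))
            (iteratedDerivWithin (m+1) f (Set.Icc 0 1) y) (Set.Icc 0 1) y := by
          rw [iteratedDerivWithin_succ]
          exact hd.hasDerivWithinAt
        exact h1.mono_of_mem_nhdsWithin (Icc_mem_nhdsGE_of_mem hy)
      have hB : ∀ y : ℝ, HasDerivAt (fun t => M * t ^ (j+1) / (Nat.factorial (j+1) : ℝ))
          (M * y ^ j / (Nat.factorial j : ℝ)) y := by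
        intro y
        have h := ((hasDerivAt_pow (j+1) y).const_mul M).div_const
          ((Nat.factorial (j+1) : ℝ))
        refine h.congr_deriv ?_
        have hfac : (Nat.factorial (j+1) : ℝ) = (j+1) * (Nat.factorial j : ℝ) := by
          rw [Nat.factorial_succ]; push_cast; ring
        rw [hfac, Nat.add_sub_cancel]
        push_cast
        have : (Nat.factorial j : ℝ) ≠ 0 := by exact_mod_cast (Nat.factorial_pos j).ne'
        field_simp
      have h00 : ‖iteratedDerivWithin m f (Set.Icc 0 1) 0‖
          ≤ M * (0:ℝ) ^ (j+1) / (Nat.factorial (j+1) : ℝ) := by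
        rw [h0 m (by omega)]
        simp
      have bound : ∀ y ∈ Set.Ico (0:ℝ) 1,
          ‖iteratedDerivWithin (m+1) f (Set.Icc 0 1) y‖ ≤ M * y ^ j / (Nat.factorial j : ℝ) :=
        fun y hy => ih (m+1) hm' y (Set.Ico_subset_Icc_self hy)
      exact image_norm_le_of_norm_deriv_right_le_deriv_boundary hcont hdiff h00 hB bound hx
  have main : ∀ x ∈ Set.Icc (0 : ℝ) 1, ‖f x‖ ≤ (1 / (Nat.factorial k : ℝ)) * x ^ k * M := by
    intro x hx
    have := key k 0 (by omega) x hx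
    simpa only [iteratedDerivWithin_zero] using this.trans_eq (by ring)
  refine ⟨main, fun hk => ?_⟩
  set xn : ℕ → ℝ := fun n => 1 / ((n : ℝ) + 1) ^ 2 with hxn
  have hxmem : ∀ n : ℕ, xn n ∈ Set.Icc (0:ℝ) 1 := by
    intro n
    have h1 : (1:ℝ) ≤ ((n:ℝ) + 1) ^ 2 := by
      nlinarith [Nat.cast_nonneg (α := ℝ) n]
    constructor
    · positivity
    · rw [div_le_one (by positivity)]; exact h1
  have hpow : ∀ n : ℕ, (xn n) ^ k = 1 / ((n : ℝ) + 1) ^ (2 * k) := by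
    intro n
    simp only [hxn, div_pow, one_pow, ← pow_mul]
  have hbound : ∀ n : ℕ, ‖f (xn n)‖
      ≤ (1 / (Nat.factorial k : ℝ)) * (1 / ((n : ℝ) + 1) ^ (2 * k)) * M := by
    intro n
    have := main (xn n) (hxmem n)
    rwa [hpow n] at this
  have hsum2 : Summable (fun n : ℕ => 1 / ((n : ℝ) + 1) ^ (2 * k)) := by
    have h2k : 2 ≤ 2 * k := by omega
    have := (Real.summable_one_div_nat_pow (p := 2 * k)).mpr h2k
    have := (summable_nat_add_iff 1).mpr this
    refine this.congr fun n => ?_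
    push_cast
    rfl
  have hsumg : Summable (fun n : ℕ =>
      (1 / (Nat.factorial k : ℝ)) * (1 / ((n : ℝ) + 1) ^ (2 * k)) * M) :=
    (hsum2.mul_left _).mul_right _
  have hsumf : Summable (fun n : ℕ => ‖f (xn n)‖) :=
    Summable.of_nonneg_of_le (fun n => norm_nonneg _) hbound hsumg
  refine ⟨hsumf, ?_⟩
  calc ∑' n : ℕ, ‖f (xn n)‖
      ≤ ∑' n : ℕ, (1 / (Nat.factorial k : ℝ)) * (1 / ((n : ℝ) + 1) ^ (2 * k)) * M :=
        Summable.tsum_le_tsum hbound hsumf hsumg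
    _ = ((1 / (Nat.factorial k : ℝ)) * ∑' n : ℕ, 1 / ((n : ℝ) + 1) ^ (2 * k)) * M := by
        rw [tsum_mul_right, tsum_mul_left]
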